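/- For a uniformly random r-matching on [rn] and 1 ≤ k ≤ rn−1, E(X_k^{(r)}) satisfies the bounds k(1 − (k/(rn))^{r−1}) ≤ E(X_k^{(r)}) ≤ k(1 − ((k−r)/(rn−r))^{r−1}), the upper bound holding when k ≥ r. -/

import Mathlib

open Finset
open scoped Classical

/-- An `r`-matching on `[r*n] = {1,...,r*n}`: a partition of `Finset.Icc 1 (r*n)`
into `r`-element blocks. -/
def IsRMatching (r n : ℕ) (M : Finset (Finset ℕ)) : Prop :=
  (∀ e ∈ M, e.card = r) ∧
  (∀ e ∈ M, ∀ f ∈ M, e ≠ f → Disjoint e f) ∧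
  M.biUnion id = Finset.Icc 1 (r * n)

/-- The finite set of all `r`-matchings on `[r*n]`. -/
noncomputable def matchings (r n : ℕ) : Finset (Finset (Finset ℕ)) :=
  ((Finset.Icc 1 (r * n)).powerset.powerset).filter (IsRMatching r n)

/-- `x_k(M) = Σ_{e ∈ M_k} |e ∩ [k]|`, summed over blocks `e` meeting both `[k]`
and its complement. -/
noncomputable def sockAt (k : ℕ) (M : Finset (Finset ℕ)) : ℕ :=
  ∑ e ∈ M.filter
      (fun e => (e ∩ Finset.Icc 1 k).Nonempty ∧ (e \ Finset.Icc 1 k).Nonempty),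
    (e ∩ Finset.Icc 1 k).card

/-- For `r = 2`: the number of edges with one endpoint in `[k]` and one outside. -/
noncomputable def crossAt (k : ℕ) (M : Finset (Finset ℕ)) : ℕ :=
  (M.filter
      (fun e => (e ∩ Finset.Icc 1 k).Nonempty ∧ (e \ Finset.Icc 1 k).Nonempty)).card

/-- The sock number of a matching on `[2n]`: `max_{1 ≤ k ≤ 2n} x_k(M)`. -/
noncomputable def sockNum (n : ℕ) (M : Finset (Finset ℕ)) : ℕ :=
  (Finset.Icc 1 (2 * n)).sup (fun k => crossAt k M)


noncomputable def matchSet (r : ℕ) (s : Finset ℕ) : Finset (Finset (Finset ℕ)) :=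
  (s.powerset.powerset).filter fun M =>
    (∀ e ∈ M, e.card = r) ∧ (∀ e ∈ M, ∀ f ∈ M, e ≠ f → Disjoint e f) ∧ M.biUnion id = s

lemma mem_matchSet {r : ℕ} {s : Finset ℕ} {M : Finset (Finset ℕ)} :
    M ∈ matchSet r s ↔
      (∀ e ∈ M, e.card = r) ∧ (∀ e ∈ M, ∀ f ∈ M, e ≠ f → Disjoint e f) ∧
        M.biUnion id = s := by
  constructor
  · intro h; exact (mem_filter.1 h).2
  · intro h
    refine mem_filter.2 ⟨?_, h⟩
    simp only [mem_powerset]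
    intro e he
    simp only [mem_powerset]
    rw [← h.2.2]
    exact subset_biUnion_of_mem id he

lemma block_subset {r : ℕ} {s : Finset ℕ} {M : Finset (Finset ℕ)} (hM : M ∈ matchSet r s)
    {e : Finset ℕ} (he : e ∈ M) : e ⊆ s := by
  rw [← (mem_matchSet.1 hM).2.2]
  exact subset_biUnion_of_mem id he

lemma image_mem_matchSet {r : ℕ} {s t : Finset ℕ} {g : ℕ → ℕ}
    (hg : Set.InjOn g s) (hst : s.image g = t) {M : Finset (Finset ℕ)}
    (hM : M ∈ matchSet r s) : M.image (Finset.image g) ∈ matchSet r t := by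
  obtain ⟨hcard, hdisj, hcover⟩ := mem_matchSet.1 hM
  refine mem_matchSet.2 ⟨?_, ?_, ?_⟩
  · intro e' he'
    obtain ⟨e, he, rfl⟩ := mem_image.1 he'
    rw [Finset.card_image_of_injOn (hg.mono (by exact_mod_cast block_subset hM he))]
    exact hcard e he
  · intro e' he' f' hf' hne
    obtain ⟨e, he, rfl⟩ := mem_image.1 he'
    obtain ⟨f, hf, rfl⟩ := mem_image.1 hf'
    have hef : e ≠ f := by rintro rfl; exact hne rfl
    rw [Finset.disjoint_left]
    rintro x hxe hxf
    obtain ⟨a, ha, rfl⟩ := mem_image.1 hxe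
    obtain ⟨b, hb, hba⟩ := mem_image.1 hxf
    have : b = a := hg (block_subset hM hf hb) (block_subset hM he ha) hba
    subst this
    exact (Finset.disjoint_left.1 (hdisj e he f hf hef)) ha hb
  · rw [← hst, ← hcover]
    ext x
    simp only [mem_biUnion, id, mem_image]
    constructor
    · rintro ⟨e', ⟨e, he, rfl⟩, hx⟩
      obtain ⟨a, ha, rfl⟩ := mem_image.1 hx
      exact ⟨a, ⟨e, he, ha⟩, rfl⟩
    · rintro ⟨a, ⟨e, he, ha⟩, rfl⟩
      exact ⟨e.image g, ⟨e, he, rfl⟩, mem_image_of_mem g ha⟩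

lemma matchSet_card_congr {r : ℕ} {s t : Finset ℕ} (h : s.card = t.card) :
    (matchSet r s).card = (matchSet r t).card := by
  classical
  have e : {x // x ∈ s} ≃ {x // x ∈ t} := Finset.equivOfCardEq h
  set g : ℕ → ℕ := fun x => if hx : x ∈ s then (e ⟨x, hx⟩ : ℕ) else x with hgdef
  set g' : ℕ → ℕ := fun y => if hy : y ∈ t then (e.symm ⟨y, hy⟩ : ℕ) else y with hg'def
  have hgt : ∀ x ∈ s, g x ∈ t := by intro x hx; simp only [hgdef, dif_pos hx]; exact (e ⟨x, hx⟩).2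
  have hg's : ∀ y ∈ t, g' y ∈ s := by
    intro y hy; simp only [hg'def, dif_pos hy]; exact (e.symm ⟨y, hy⟩).2
  have hgg' : ∀ x ∈ s, g' (g x) = x := by
    intro x hx
    have h1 : g x ∈ t := hgt x hx
    simp only [hgdef, hg'def, dif_pos hx] at h1 ⊢
    rw [dif_pos h1]
    have : (⟨(e ⟨x, hx⟩ : ℕ), h1⟩ : {y // y ∈ t}) = e ⟨x, hx⟩ := rfl
    rw [this, Equiv.symm_apply_apply]
  have hg'g : ∀ y ∈ t, g (g' y) = y := by
    intro y hy
    have h1 : g' y ∈ s := hg's y hy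
    simp only [hgdef, hg'def, dif_pos hy] at h1 ⊢
    rw [dif_pos h1]
    have : (⟨(e.symm ⟨y, hy⟩ : ℕ), h1⟩ : {x // x ∈ s}) = e.symm ⟨y, hy⟩ := rfl
    rw [this, Equiv.apply_symm_apply]
  have hginj : Set.InjOn g s := by
    intro a ha b hb hab
    have := congrArg g' hab
    rwa [hgg' a ha, hgg' b hb] at this
  have hg'inj : Set.InjOn g' t := by
    intro a ha b hb hab
    have := congrArg g hab
    rwa [hg'g a ha, hg'g b hb] at this
  have himg : s.image g = t := by
    apply Finset.eq_of_subset_of_card_le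
    · intro y hy; obtain ⟨x, hx, rfl⟩ := mem_image.1 hy; exact hgt x hx
    · rw [Finset.card_image_of_injOn hginj, h]
  have himg' : t.image g' = s := by
    apply Finset.eq_of_subset_of_card_le
    · intro y hy; obtain ⟨x, hx, rfl⟩ := mem_image.1 hy; exact hg's x hx
    · rw [Finset.card_image_of_injOn hg'inj, h]
  refine Finset.card_bij' (fun M _ => M.image (Finset.image g))
    (fun N _ => N.image (Finset.image g')) ?_ ?_ ?_ ?_
  · intro M hM; exact image_mem_matchSet hginj himg hM
  · intro N hN; exact image_mem_matchSet hg'inj himg' hN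
  · intro M hM
    show (M.image (Finset.image g)).image (Finset.image g') = M
    rw [Finset.image_image]
    have : ∀ e ∈ M, (Finset.image g' ∘ Finset.image g) e = id e := by
      intro eb heb
      simp only [Function.comp_apply, Finset.image_image, id]
      have hsub := block_subset hM heb
      calc eb.image (g' ∘ g) = eb.image id := Finset.image_congr (by
            intro x hx; exact hgg' x (hsub hx))
        _ = eb := Finset.image_id
    rw [Finset.image_congr this, Finset.image_id]
  · intro N hN
    show (N.image (Finset.image g')).image (Finset.image g) = N
    rw [Finset.image_image]
    have : ∀ e ∈ N, (Finset.image g ∘ Finset.image g') e = id e := by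
      intro eb heb
      simp only [Function.comp_apply, Finset.image_image, id]
      have hsub := block_subset hN heb
      calc eb.image (g ∘ g') = eb.image id := Finset.image_congr (by
            intro x hx; exact hg'g x (hsub hx))
        _ = eb := Finset.image_id
    rw [Finset.image_congr this, Finset.image_id]


lemma insert_mem_matchSet {r : ℕ} {s e : Finset ℕ} (he : e ⊆ s) (hec : e.card = r)
    {N : Finset (Finset ℕ)} (hN : N ∈ matchSet r (s \ e)) : insert e N ∈ matchSet r s := by
  obtain ⟨hcard, hdisj, hcover⟩ := mem_matchSet.1 hN
  refine mem_matchSet.2 ⟨?_, ?_, ?_⟩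
  · intro f hf
    rcases mem_insert.1 hf with rfl | hf
    · exact hec
    · exact hcard f hf
  · intro f hf g hg hne
    have key : ∀ f ∈ N, Disjoint e f := by
      intro f hf
      have : f ⊆ s \ e := block_subset hN hf
      exact (disjoint_sdiff_self_right.mono_right this)
    rcases mem_insert.1 hf with hfe | hfN <;> rcases mem_insert.1 hg with hge | hgN
    · exact absurd (hfe.trans hge.symm) hne
    · exact hfe ▸ key g hgN
    · exact hge ▸ (key f hfN).symm
    · exact hdisj f hfN g hgN hne
  · rw [Finset.biUnion_insert, hcover, id]
    exact Finset.union_sdiff_of_subset he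

lemma not_mem_of_matchSet_sdiff {r : ℕ} (hr : 1 ≤ r) {s e : Finset ℕ} (hec : e.card = r)
    {N : Finset (Finset ℕ)} (hN : N ∈ matchSet r (s \ e)) : e ∉ N := by
  intro heN
  have hsub : e ⊆ s \ e := block_subset hN heN
  have hne : e.Nonempty := Finset.card_pos.1 (by omega)
  obtain ⟨x, hx⟩ := hne
  exact (Finset.mem_sdiff.1 (hsub hx)).2 hx

lemma card_filter_mem {r : ℕ} (hr : 1 ≤ r) {s e : Finset ℕ} (he : e ⊆ s) (hec : e.card = r) :
    ((matchSet r s).filter (fun M => e ∈ M)).card = (matchSet r (s \ e)).card := by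
  refine Finset.card_bij' (fun M _ => M.erase e) (fun N _ => insert e N) ?_ ?_ ?_ ?_
  · intro M hM
    obtain ⟨hMmem, heM⟩ := mem_filter.1 hM
    obtain ⟨hcard, hdisj, hcover⟩ := mem_matchSet.1 hMmem
    refine mem_matchSet.2 ⟨?_, ?_, ?_⟩
    · exact fun f hf => hcard f (Finset.erase_subset e M hf)
    · intro f hf g hg hne
      exact hdisj f (Finset.erase_subset e M hf) g (Finset.erase_subset e M hg) hne
    · ext x
      simp only [mem_biUnion, mem_erase, id, mem_sdiff]
      constructor
      · rintro ⟨f, ⟨hfe, hfM⟩, hxf⟩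
        refine ⟨by rw [← hcover]; exact mem_biUnion.2 ⟨f, hfM, hxf⟩, fun hxe => ?_⟩
        exact (Finset.disjoint_left.1 (hdisj f hfM e heM hfe)) hxf hxe
      · rintro ⟨hxs, hxe⟩
        rw [← hcover] at hxs
        obtain ⟨f, hfM, hxf⟩ := mem_biUnion.1 hxs
        exact ⟨f, ⟨fun h => hxe (h ▸ hxf), hfM⟩, hxf⟩
  · intro N hN
    exact mem_filter.2 ⟨insert_mem_matchSet he hec hN, mem_insert_self e N⟩
  · intro M hM
    exact Finset.insert_erase (mem_filter.1 hM).2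
  · intro N hN
    exact Finset.erase_insert (not_mem_of_matchSet_sdiff hr hec hN)

lemma matchSet_nonempty {r : ℕ} (hr : 1 ≤ r) :
    ∀ (m : ℕ) (s : Finset ℕ), s.card = r * m → (matchSet r s).Nonempty := by
  intro m
  induction m with
  | zero =>
    intro s hs
    rw [Nat.mul_zero, Finset.card_eq_zero] at hs
    subst hs
    exact ⟨∅, mem_matchSet.2 ⟨by simp, by simp, by simp⟩⟩
  | succ m ih =>
    intro s hs
    have hrs : r ≤ s.card := by rw [hs]; nlinarith
    obtain ⟨e, hes, hec⟩ := Finset.exists_subset_card_eq hrs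
    have hsd : (s \ e).card = r * m := by
      rw [Finset.card_sdiff_of_subset hes, hs, hec]; ring_nf; omega
    obtain ⟨N, hN⟩ := ih (s \ e) hsd
    exact ⟨insert e N, insert_mem_matchSet hes hec hN⟩

lemma unique_block {r : ℕ} {s : Finset ℕ} {M : Finset (Finset ℕ)} (hM : M ∈ matchSet r s)
    {a : ℕ} (ha : a ∈ s) : ∃ e, M.filter (fun e => a ∈ e) = {e} ∧ e ∈ M ∧ a ∈ e := by
  obtain ⟨hcard, hdisj, hcover⟩ := mem_matchSet.1 hM
  rw [← hcover] at ha
  obtain ⟨e0, he0, hae0⟩ := mem_biUnion.1 ha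
  refine ⟨e0, ?_, he0, hae0⟩
  ext f
  simp only [mem_filter, mem_singleton]
  constructor
  · rintro ⟨hfM, haf⟩
    by_contra hne
    exact (Finset.disjoint_left.1 (hdisj f hfM e0 he0 hne)) haf hae0
  · rintro rfl
    exact ⟨he0, hae0⟩

lemma matchSet_card_eq_sum {r : ℕ} {s : Finset ℕ} {a : ℕ} (ha : a ∈ s) :
    (matchSet r s).card =
      ∑ e ∈ (s.powersetCard r).filter (fun e => a ∈ e),
        ((matchSet r s).filter (fun M => e ∈ M)).card := by
  have H : ∀ M ∈ matchSet r s, (M.filter (fun e => a ∈ e)).biUnion id ∈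
      (s.powersetCard r).filter (fun e => a ∈ e) := by
    intro M hM
    obtain ⟨e0, hfil, he0M, hae0⟩ := unique_block hM ha
    rw [hfil, Finset.singleton_biUnion, id_eq]
    refine mem_filter.2 ⟨Finset.mem_powersetCard.2 ⟨block_subset hM he0M,
      (mem_matchSet.1 hM).1 e0 he0M⟩, hae0⟩
  rw [Finset.card_eq_sum_card_fiberwise H]
  refine Finset.sum_congr rfl ?_
  intro e he
  congr 1
  apply Finset.filter_congr
  intro M hM
  obtain ⟨e0, hfil, he0M, hae0⟩ := unique_block hM ha
  rw [hfil, Finset.singleton_biUnion, id_eq]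
  constructor
  · rintro rfl; exact he0M
  · intro heM
    have : e ∈ M.filter (fun e => a ∈ e) := mem_filter.2 ⟨heM, (mem_filter.1 he).2⟩
    rw [hfil, mem_singleton] at this
    exact this.symm

lemma card_index {r : ℕ} (hr : 1 ≤ r) {s : Finset ℕ} {a : ℕ} (ha : a ∈ s) :
    ((s.powersetCard r).filter (fun e => a ∈ e)).card = (s.card - 1).choose (r - 1) := by
  have : ((s.erase a).powersetCard (r-1)).card = (s.card - 1).choose (r - 1) := by
    rw [Finset.card_powersetCard, Finset.card_erase_of_mem ha]
  rw [← this]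
  refine Finset.card_bij' (fun e _ => e.erase a) (fun f _ => insert a f) ?_ ?_ ?_ ?_
  · intro e he
    obtain ⟨hmem, hae⟩ := mem_filter.1 he
    obtain ⟨hsub, hcard⟩ := Finset.mem_powersetCard.1 hmem
    exact Finset.mem_powersetCard.2 ⟨Finset.erase_subset_erase a hsub,
      by rw [Finset.card_erase_of_mem hae, hcard]⟩
  · intro f hf
    obtain ⟨hsub, hcard⟩ := Finset.mem_powersetCard.1 hf
    have haf : a ∉ f := fun h => (Finset.mem_erase.1 (hsub h)).1 rfl
    refine mem_filter.2 ⟨Finset.mem_powersetCard.2 ⟨?_, ?_⟩, mem_insert_self a f⟩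
    · exact Finset.insert_subset ha (hsub.trans (Finset.erase_subset a s))
    · rw [Finset.card_insert_of_notMem haf, hcard]; omega
  · intro e he
    exact Finset.insert_erase (mem_filter.1 he).2
  · intro f hf
    apply Finset.erase_insert
    intro h
    exact (Finset.mem_erase.1 ((Finset.mem_powersetCard.1 hf).1 h)).1 rfl



lemma sockAt_add {r n k : ℕ} (hr : 1 ≤ r) (hk : k ≤ r * n) {M : Finset (Finset ℕ)}
    (hM : M ∈ matchSet r (Finset.Icc 1 (r * n))) :
    sockAt k M + r * (M.filter (fun e => e ⊆ Finset.Icc 1 k)).card = k := by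
  obtain ⟨hcard, hdisj, hcover⟩ := mem_matchSet.1 hM
  have hsub : Finset.Icc 1 k ⊆ Finset.Icc 1 (r * n) := Finset.Icc_subset_Icc le_rfl hk
  -- total: ∑ over all blocks of |e ∩ [k]| = k
  have htot : ∑ e ∈ M, (e ∩ Finset.Icc 1 k).card = k := by
    have h1 : M.biUnion (fun e => e ∩ Finset.Icc 1 k) = Finset.Icc 1 k := by
      ext x
      simp only [mem_biUnion, mem_inter]
      constructor
      · rintro ⟨e, he, hx, hxk⟩; exact hxk
      · intro hx
        have : x ∈ M.biUnion id := by rw [hcover]; exact hsub hx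
        obtain ⟨e, he, hxe⟩ := mem_biUnion.1 this
        exact ⟨e, he, hxe, hx⟩
    have h2 : (M.biUnion (fun e => e ∩ Finset.Icc 1 k)).card =
        ∑ e ∈ M, (e ∩ Finset.Icc 1 k).card := by
      apply Finset.card_biUnion
      intro e he f hf hne
      exact Finset.disjoint_of_subset_left Finset.inter_subset_left
        (Finset.disjoint_of_subset_right Finset.inter_subset_left (hdisj e he f hf hne))
    rw [← h2, h1, Nat.card_Icc]
    omega
  -- the non-crossing part
  have hnc : ∑ e ∈ M.filter (fun e =>
        ¬((e ∩ Finset.Icc 1 k).Nonempty ∧ (e \ Finset.Icc 1 k).Nonempty)),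
      (e ∩ Finset.Icc 1 k).card = r * (M.filter (fun e => e ⊆ Finset.Icc 1 k)).card := by
    have hss : M.filter (fun e => e ⊆ Finset.Icc 1 k) ⊆ M.filter (fun e =>
        ¬((e ∩ Finset.Icc 1 k).Nonempty ∧ (e \ Finset.Icc 1 k).Nonempty)) := by
      intro e he
      obtain ⟨heM, hek⟩ := mem_filter.1 he
      refine mem_filter.2 ⟨heM, ?_⟩
      rintro ⟨-, h2⟩
      rw [Finset.sdiff_nonempty] at h2
      exact h2 hek
    rw [← Finset.sum_subset hss]
    · rw [Finset.sum_congr rfl (fun e he => ?_), Finset.sum_const, smul_eq_mul, mul_comm]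
      obtain ⟨heM, hek⟩ := mem_filter.1 he
      rw [Finset.inter_eq_left.2 hek]
      exact hcard e heM
    · intro e he hne
      obtain ⟨heM, hP⟩ := mem_filter.1 he
      push_neg at hP
      have hnsub : ¬ e ⊆ Finset.Icc 1 k := by
        intro h
        exact hne (mem_filter.2 ⟨heM, h⟩)
      have : (e \ Finset.Icc 1 k).Nonempty := Finset.sdiff_nonempty.2 hnsub
      have h0 : ¬ (e ∩ Finset.Icc 1 k).Nonempty := fun h => (this.ne_empty) (by
        exact absurd this (by simpa using hP h))
      rw [Finset.not_nonempty_iff_eq_empty.1 h0, Finset.card_empty]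
  have := Finset.sum_filter_add_sum_filter_not M
    (fun e => (e ∩ Finset.Icc 1 k).Nonempty ∧ (e \ Finset.Icc 1 k).Nonempty)
    (fun e => (e ∩ Finset.Icc 1 k).card)
  rw [hnc] at this
  calc sockAt k M + r * (M.filter (fun e => e ⊆ Finset.Icc 1 k)).card
      = ∑ e ∈ M.filter (fun e => (e ∩ Finset.Icc 1 k).Nonempty ∧
          (e \ Finset.Icc 1 k).Nonempty), (e ∩ Finset.Icc 1 k).card +
        r * (M.filter (fun e => e ⊆ Finset.Icc 1 k)).card := rfl
    _ = ∑ e ∈ M, (e ∩ Finset.Icc 1 k).card := this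
    _ = k := htot

lemma sum_internal {r n k : ℕ} (hr : 1 ≤ r) (hk : k ≤ r * n) :
    ∑ M ∈ matchSet r (Finset.Icc 1 (r * n)), (M.filter (fun e => e ⊆ Finset.Icc 1 k)).card
      = k.choose r * (matchSet r (Finset.range (r * (n - 1)))).card := by
  set s := Finset.Icc 1 (r * n) with hs
  have hsub : Finset.Icc 1 k ⊆ s := Finset.Icc_subset_Icc le_rfl hk
  have step1 : ∀ M ∈ matchSet r s, (M.filter (fun e => e ⊆ Finset.Icc 1 k)).card
      = ∑ e ∈ (Finset.Icc 1 k).powersetCard r, if e ∈ M then 1 else 0 := by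
    intro M hM
    have : M.filter (fun e => e ⊆ Finset.Icc 1 k)
        = ((Finset.Icc 1 k).powersetCard r).filter (fun e => e ∈ M) := by
      ext e
      simp only [mem_filter, Finset.mem_powersetCard]
      constructor
      · rintro ⟨heM, hek⟩
        exact ⟨⟨hek, (mem_matchSet.1 hM).1 e heM⟩, heM⟩
      · rintro ⟨⟨hek, -⟩, heM⟩
        exact ⟨heM, hek⟩
    rw [this, Finset.card_filter]
  rw [Finset.sum_congr rfl step1, Finset.sum_comm]
  have step2 : ∀ e ∈ (Finset.Icc 1 k).powersetCard r,
      (∑ M ∈ matchSet r s, if e ∈ M then 1 else 0)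
        = (matchSet r (Finset.range (r * (n - 1)))).card := by
    intro e he
    obtain ⟨hek, hec⟩ := Finset.mem_powersetCard.1 he
    have hes : e ⊆ s := hek.trans hsub
    rw [← Finset.card_filter, card_filter_mem hr hes hec]
    apply matchSet_card_congr
    rw [Finset.card_sdiff_of_subset hes, hec, Finset.card_range, hs, Nat.card_Icc]
    cases n with
    | zero => simp
    | succ m => simp [Nat.mul_succ]
  rw [Finset.sum_congr rfl step2, Finset.sum_const, smul_eq_mul,
    Finset.card_powersetCard, Nat.card_Icc]
  norm_num

lemma matchSet_total {r n : ℕ} (hr : 1 ≤ r) (hn : 1 ≤ n) :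
    (matchSet r (Finset.Icc 1 (r * n))).card
      = (r * n - 1).choose (r - 1) * (matchSet r (Finset.range (r * (n - 1)))).card := by
  set s := Finset.Icc 1 (r * n) with hs
  have h1 : (1 : ℕ) ∈ s := by
    rw [hs, Finset.mem_Icc]
    exact ⟨le_rfl, by nlinarith⟩
  rw [matchSet_card_eq_sum h1]
  have step : ∀ e ∈ (s.powersetCard r).filter (fun e => 1 ∈ e),
      ((matchSet r s).filter (fun M => e ∈ M)).card
        = (matchSet r (Finset.range (r * (n - 1)))).card := by
    intro e he
    obtain ⟨hmem, -⟩ := mem_filter.1 he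
    obtain ⟨hes, hec⟩ := Finset.mem_powersetCard.1 hmem
    rw [card_filter_mem hr hes hec]
    apply matchSet_card_congr
    rw [Finset.card_sdiff_of_subset hes, hec, Finset.card_range, hs, Nat.card_Icc]
    cases n with
    | zero => simp
    | succ m => simp [Nat.mul_succ]
  rw [Finset.sum_congr rfl step, Finset.sum_const, smul_eq_mul, card_index hr h1]
  congr 2
  rw [hs, Nat.card_Icc]
  omega

lemma grand {r n k : ℕ} (hr : 1 ≤ r) (hk : k ≤ r * n) :
    (∑ M ∈ matchSet r (Finset.Icc 1 (r * n)), sockAt k M)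
      + r * (k.choose r * (matchSet r (Finset.range (r * (n - 1)))).card)
      = k * (matchSet r (Finset.Icc 1 (r * n))).card := by
  rw [← sum_internal hr hk, Finset.mul_sum, ← Finset.sum_add_distrib]
  rw [Finset.sum_congr rfl (fun M hM => sockAt_add hr hk hM), Finset.sum_const,
    smul_eq_mul, mul_comm]


lemma desc_ineq1 {r k m : ℕ} (hk : k ≤ m) :
    (k - 1).choose (r - 1) * m ^ (r - 1) ≤ (m - 1).choose (r - 1) * k ^ (r - 1) := by
  have key : (k - 1).descFactorial (r - 1) * m ^ (r - 1)
      ≤ (m - 1).descFactorial (r - 1) * k ^ (r - 1) := by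
    have hm : m ^ (r - 1) = ∏ _i ∈ Finset.range (r - 1), m := by
      rw [Finset.prod_const, Finset.card_range]
    have hkp : k ^ (r - 1) = ∏ _i ∈ Finset.range (r - 1), k := by
      rw [Finset.prod_const, Finset.card_range]
    rw [hm, hkp, Nat.descFactorial_eq_prod_range, Nat.descFactorial_eq_prod_range,
      ← Finset.prod_mul_distrib, ← Finset.prod_mul_distrib]
    apply Finset.prod_le_prod'
    intro i _
    rcases le_or_gt k (1 + i) with h | h
    · have : k - 1 - i = 0 := by omega
      simp [this]
    · have h1 : 1 + i ≤ k := by omega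
      have h2 : 1 + i ≤ m := by omega
      have hkm : (k : ℤ) ≤ m := by exact_mod_cast hk
      have e1 : k - 1 - i = k - (1 + i) := by omega
      have e2 : m - 1 - i = m - (1 + i) := by omega
      rw [e1, e2]
      zify [h1, h2]
      nlinarith [mul_le_mul_of_nonneg_left hkm (by positivity : (0:ℤ) ≤ 1 + (i:ℤ))]
  have h1 := Nat.descFactorial_eq_factorial_mul_choose (k - 1) (r - 1)
  have h2 := Nat.descFactorial_eq_factorial_mul_choose (m - 1) (r - 1)
  rw [h1, h2] at key
  have := (r - 1).factorial_pos
  calc (k - 1).choose (r - 1) * m ^ (r - 1)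
      ≤ (m - 1).choose (r - 1) * k ^ (r - 1) := by
        apply Nat.le_of_mul_le_mul_left _ this
        calc (r - 1).factorial * ((k - 1).choose (r - 1) * m ^ (r - 1))
            = (r - 1).factorial * (k - 1).choose (r - 1) * m ^ (r - 1) := by ring
          _ ≤ (r - 1).factorial * (m - 1).choose (r - 1) * k ^ (r - 1) := key
          _ = (r - 1).factorial * ((m - 1).choose (r - 1) * k ^ (r - 1)) := by ring

lemma desc_ineq2 {r k m : ℕ} (hr : 1 ≤ r) (hrk : r ≤ k) (hk : k ≤ m) :
    (m - 1).choose (r - 1) * (k - r) ^ (r - 1)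
      ≤ (k - 1).choose (r - 1) * (m - r) ^ (r - 1) := by
  have key : (m - 1).descFactorial (r - 1) * (k - r) ^ (r - 1)
      ≤ (k - 1).descFactorial (r - 1) * (m - r) ^ (r - 1) := by
    have hm : (m - r) ^ (r - 1) = ∏ _i ∈ Finset.range (r - 1), (m - r) := by
      rw [Finset.prod_const, Finset.card_range]
    have hkp : (k - r) ^ (r - 1) = ∏ _i ∈ Finset.range (r - 1), (k - r) := by
      rw [Finset.prod_const, Finset.card_range]
    rw [hm, hkp, Nat.descFactorial_eq_prod_range, Nat.descFactorial_eq_prod_range,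
      ← Finset.prod_mul_distrib, ← Finset.prod_mul_distrib]
    apply Finset.prod_le_prod'
    intro i hi
    have hi' : i < r - 1 := Finset.mem_range.1 hi
    have h1 : 1 + i ≤ k := by omega
    have h2 : 1 + i ≤ m := by omega
    have e1 : k - 1 - i = k - (1 + i) := by omega
    have e2 : m - 1 - i = m - (1 + i) := by omega
    rw [e1, e2]
    zify [h1, h2, hrk, hrk.trans hk]
    have hkm : (k : ℤ) ≤ m := by exact_mod_cast hk
    have hra : (0:ℤ) ≤ (r : ℤ) - (1 + (i:ℤ)) := by
      have h3 : 1 + i ≤ r := by omega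
      have h4 : (1 + (i:ℤ)) ≤ (r:ℤ) := by exact_mod_cast h3
      linarith
    nlinarith [mul_nonneg hra (by linarith : (0:ℤ) ≤ (m:ℤ) - k)]
  have h1 := Nat.descFactorial_eq_factorial_mul_choose (k - 1) (r - 1)
  have h2 := Nat.descFactorial_eq_factorial_mul_choose (m - 1) (r - 1)
  rw [h1, h2] at key
  have hfp := (r - 1).factorial_pos
  apply Nat.le_of_mul_le_mul_left _ hfp
  calc (r - 1).factorial * ((m - 1).choose (r - 1) * (k - r) ^ (r - 1))
      = (r - 1).factorial * (m - 1).choose (r - 1) * (k - r) ^ (r - 1) := by ring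
    _ ≤ (r - 1).factorial * (k - 1).choose (r - 1) * (m - r) ^ (r - 1) := key
    _ = (r - 1).factorial * ((k - 1).choose (r - 1) * (m - r) ^ (r - 1)) := by ring

lemma choose_swap {r k : ℕ} (hr : 1 ≤ r) (hk : 1 ≤ k) :
    r * k.choose r = k * (k - 1).choose (r - 1) := by
  have := Nat.add_one_mul_choose_eq (k - 1) (r - 1)
  have e1 : k - 1 + 1 = k := by omega
  have e3 : r - 1 + 1 = r := by omega
  rw [e1] at this
  rw [this, e3]
  ring

theorem stmt12 (r n k : ℕ) (hr : 2 ≤ r) (hn : 1 ≤ n) (hk : 1 ≤ k) (hk' : k ≤ r * n - 1) :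
    (k : ℚ) * (1 - ((k : ℚ) / (r * n)) ^ (r - 1)) ≤
        (∑ M ∈ matchings r n, (sockAt k M : ℚ)) / (matchings r n).card ∧
      (r ≤ k →
        (∑ M ∈ matchings r n, (sockAt k M : ℚ)) / (matchings r n).card ≤
          (k : ℚ) * (1 - (((k : ℚ) - r) / ((r : ℚ) * n - r)) ^ (r - 1))) := by
  have hr1 : 1 ≤ r := by omega
  have hrrn : r ≤ r * n := by nlinarith
  have hrn2 : 2 ≤ r * n := by omega
  have hkrn : k < r * n := by omega
  have hM : matchings r n = matchSet r (Finset.Icc 1 (r * n)) := by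
    ext M
    simp only [matchings, matchSet, IsRMatching, mem_filter]
  set N := (matchSet r (Finset.range (r * (n - 1)))).card with hN
  set c := (matchSet r (Finset.Icc 1 (r * n))).card with hc
  set D := (r * n - 1).choose (r - 1) with hD
  set C1 := (k - 1).choose (r - 1) with hC1
  have hNpos : 0 < N := by
    obtain ⟨M0, hM0⟩ := matchSet_nonempty hr1 (n - 1) (Finset.range (r * (n - 1)))
      (Finset.card_range _)
    exact Finset.card_pos.2 ⟨M0, hM0⟩
  have hDpos : 0 < D := Nat.choose_pos (by omega)
  have hctot : c = D * N := matchSet_total hr1 hn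
  have hcpos : 0 < c := by rw [hctot]; exact Nat.mul_pos hDpos hNpos
  have hgrand := grand (n := n) (k := k) hr1 hkrn.le
  have hswap : r * (k.choose r * N) = k * C1 * N := by
    rw [← mul_assoc, choose_swap hr1 hk, hC1]
  rw [hswap] at hgrand
  have hSQ : (∑ M ∈ matchings r n, (sockAt k M : ℚ))
      = (k : ℚ) * c - (k : ℚ) * C1 * N := by
    rw [hM, ← Nat.cast_sum]
    have h2 : ((∑ M ∈ matchSet r (Finset.Icc 1 (r * n)), sockAt k M : ℕ) : ℚ)
        + (k : ℚ) * C1 * N = (k : ℚ) * c := by exact_mod_cast hgrand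
    linarith
  have hcQ : ((matchings r n).card : ℚ) = (c : ℚ) := by rw [hM]
  have hcne : (c : ℚ) ≠ 0 := Nat.cast_ne_zero.2 hcpos.ne'
  have hDne : (D : ℚ) ≠ 0 := Nat.cast_ne_zero.2 hDpos.ne'
  have hNne : (N : ℚ) ≠ 0 := Nat.cast_ne_zero.2 hNpos.ne'
  have hD0 : (0 : ℚ) < D := by exact_mod_cast hDpos
  have hcQeq : (c : ℚ) = (D : ℚ) * N := by exact_mod_cast hctot
  have hE : (∑ M ∈ matchings r n, (sockAt k M : ℚ)) / (matchings r n).card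
      = (k : ℚ) * (1 - (C1 : ℚ) / D) := by
    rw [hSQ, hcQ, hcQeq]
    field_simp
  rw [hE]
  have hkQ : (0 : ℚ) ≤ (k : ℚ) := Nat.cast_nonneg k
  constructor
  · apply mul_le_mul_of_nonneg_left _ hkQ
    refine sub_le_sub_left ?_ 1
    have hnat := desc_ineq1 (r := r) (k := k) (m := r * n) hkrn.le
    have hrnQ : (0 : ℚ) < ((r * n : ℕ) : ℚ) := by
      exact_mod_cast (by omega : 0 < r * n)
    have hcast : ((r : ℚ) * n) = ((r * n : ℕ) : ℚ) := by push_cast; ring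
    rw [hcast, div_pow, div_le_div_iff₀ hD0 (pow_pos hrnQ (r - 1)),
      mul_comm (((k : ℚ)) ^ (r - 1)) ((D : ℚ))]
    exact_mod_cast hnat
  · intro hrk
    apply mul_le_mul_of_nonneg_left _ hkQ
    refine sub_le_sub_left ?_ 1
    have hnat := desc_ineq2 (m := r * n) hr1 hrk hkrn.le
    have hsub1 : ((k : ℚ) - r) = ((k - r : ℕ) : ℚ) := by
      rw [Nat.cast_sub hrk]
    have hsub2 : ((r : ℚ) * n - r) = ((r * n - r : ℕ) : ℚ) := by
      rw [Nat.cast_sub hrrn]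
      push_cast
      ring
    have hdenpos : (0 : ℚ) < ((r * n - r : ℕ) : ℚ) := by
      have : 0 < r * n - r := by omega
      exact_mod_cast this
    rw [hsub1, hsub2, div_pow, div_le_div_iff₀ (pow_pos hdenpos (r - 1)) hD0,
      mul_comm (((k - r : ℕ) : ℚ) ^ (r - 1)) ((D : ℚ))]
    exact_mod_cast hnat
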